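/- Let V be a concave bounded operator on a Hilbert space H. Then its Cauchy dual V' := V(V*V)⁻¹ is a hyponormal contraction, i.e., ‖(V')*h‖ ≤ ‖V'h‖ for all h ∈ H and ‖V'‖ ≤ 1. -/

import Mathlib

open ContinuousLinearMap

variable {H : Type*} [NormedAddCommGroup H] [InnerProductSpace ℂ H] [CompleteSpace H]

local notation "⟪" x ", " y "⟫" => @inner ℂ _ _ x y

/-- The Cauchy dual V' = V(V*V)⁻¹ of a concave operator is a hyponormal
contraction. -/
theorem stmt17 (V T : H →L[ℂ] H)
    (hconc : ∀ h : H, ‖V (V h)‖ ^ 2 + ‖h‖ ^ 2 ≤ 2 * ‖V h‖ ^ 2)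
    (hT₁ : T ∘L (adjoint V ∘L V) = 1) (hT₂ : (adjoint V ∘L V) ∘L T = 1) :
    (∀ h : H, ‖adjoint (V ∘L T) h‖ ≤ ‖(V ∘L T) h‖) ∧ ‖V ∘L T‖ ≤ 1 := by
  -- A u ⟪·,·⟫ identity
  have hA : ∀ u v : H, ⟪(adjoint V ∘L V) u, v⟫ = ⟪V u, V v⟫ := by
    intro u v; simp [comp_apply, adjoint_inner_left]
  have hTA : ∀ x : H, (adjoint V ∘L V) (T x) = x := by
    intro x
    have := ContinuousLinearMap.ext_iff.mp hT₂ x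
    simpa [comp_apply] using this
  -- expansivity
  have hexp : ∀ h : H, ‖h‖ ≤ ‖V h‖ := by
    intro h
    by_contra hc
    push_neg at hc
    set d := ‖V h‖ ^ 2 - ‖h‖ ^ 2 with hd
    have hdneg : d < 0 := by nlinarith [norm_nonneg h, norm_nonneg (V h)]
    have step : ∀ n : ℕ, ‖(V ^ (n + 1)) h‖ ^ 2 - ‖(V ^ n) h‖ ^ 2 ≤ d := by
      intro n
      induction n with
      | zero => simp [hd, pow_one]
      | succ n ih =>
        have hc2 := hconc ((V ^ n) h)
        have e1 : (V ^ (n + 1)) h = V ((V ^ n) h) := by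
          rw [pow_succ']; rfl
        have e2 : (V ^ (n + 2)) h = V (V ((V ^ n) h)) := by
          rw [show n + 2 = (n + 1) + 1 from rfl, pow_succ', ContinuousLinearMap.mul_apply, e1]
        rw [e2, e1]
        rw [e1] at ih
        linarith
    have tot : ∀ n : ℕ, ‖(V ^ n) h‖ ^ 2 ≤ ‖h‖ ^ 2 + n * d := by
      intro n
      induction n with
      | zero => simp
      | succ n ih =>
        have := step n
        rw [Nat.cast_succ]
        linarith
    obtain ⟨n, hn⟩ := exists_nat_gt (‖h‖ ^ 2 / (-d))
    have h1 := tot n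
    have h2 : ‖h‖ ^ 2 + n * d < 0 := by
      rw [div_lt_iff₀ (by linarith)] at hn
      nlinarith
    nlinarith [sq_nonneg ‖(V ^ n) h‖]
  -- basic identity
  have hb : ∀ x : H, ⟪x, T x⟫ = (‖V (T x)‖ : ℂ) ^ 2 := by
    intro x
    have h1 := hA (T x) (T x)
    rw [hTA] at h1
    rw [h1, inner_self_eq_norm_sq_to_K]
    norm_cast
  have hbre : ∀ x : H, (⟪x, T x⟫).re = ‖V (T x)‖ ^ 2 := by
    intro x
    rw [hb x, ← Complex.ofReal_pow, Complex.ofReal_re]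
  -- T contraction
  have hTnorm : ∀ x : H, ‖T x‖ ≤ ‖x‖ := by
    intro x
    have h1 : ‖T x‖ ^ 2 ≤ ‖V (T x)‖ ^ 2 := by
      have := hexp (T x); nlinarith [norm_nonneg (T x)]
    have h2 : ‖V (T x)‖ ^ 2 ≤ ‖x‖ * ‖T x‖ := by
      rw [← hbre x]
      calc (⟪x, T x⟫).re ≤ ‖⟪x, T x⟫‖ := Complex.re_le_norm _
        _ ≤ ‖x‖ * ‖T x‖ := norm_inner_le_norm x (T x)
    rcases eq_or_lt_of_le (norm_nonneg (T x)) with h0 | h0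
    · rw [← h0]; exact norm_nonneg x
    · nlinarith
  -- VT contraction
  have hScontr : ∀ x : H, ‖V (T x)‖ ≤ ‖x‖ := by
    intro x
    have h2 : ‖V (T x)‖ ^ 2 ≤ ‖x‖ * ‖T x‖ := by
      rw [← hbre x]
      calc (⟪x, T x⟫).re ≤ ‖⟪x, T x⟫‖ := Complex.re_le_norm _
        _ ≤ ‖x‖ * ‖T x‖ := norm_inner_le_norm x (T x)
    nlinarith [hTnorm x, norm_nonneg x, norm_nonneg (V (T x)), norm_nonneg (T x)]
  -- step 1 : ‖V (V (T u))‖ ≤ ‖u‖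
  have hS : ∀ u : H, ‖V (V (T u))‖ ≤ ‖u‖ := by
    intro u
    have hc2 := hconc (T u)
    have hsub : 0 ≤ ‖u - T u‖ ^ 2 := sq_nonneg _
    have hexpand : ‖u - T u‖ ^ 2 = ‖u‖ ^ 2 - 2 * (⟪u, T u⟫).re + ‖T u‖ ^ 2 := by
      have := @norm_sub_sq ℂ H _ _ _ u (T u)
      simpa using this
    have h3 : ‖V (V (T u))‖ ^ 2 ≤ ‖u‖ ^ 2 := by
      rw [hexpand] at hsub
      have := hbre u
      nlinarith
    nlinarith [norm_nonneg (V (V (T u))), norm_nonneg u]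
  constructor
  · intro x
    set y := adjoint (V ∘L T) x with hy
    have key : ⟪y, y⟫ = ⟪V (T x), V (V (T y))⟫ := by
      calc ⟪y, y⟫ = ⟪adjoint (V ∘L T) x, y⟫ := by rw [hy]
        _ = ⟪x, (V ∘L T) y⟫ := adjoint_inner_left _ _ _
        _ = ⟪(adjoint V ∘L V) (T x), V (T y)⟫ := by rw [hTA, comp_apply]
        _ = ⟪V (T x), V (V (T y))⟫ := hA _ _
    have hn : ‖y‖ ^ 2 ≤ ‖(V ∘L T) x‖ * ‖y‖ := by
      have h1 : ‖⟪y, y⟫‖ = ‖y‖ ^ 2 := by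
        rw [inner_self_eq_norm_sq_to_K]
        push_cast
        simp [abs_of_nonneg (norm_nonneg y)]
      calc ‖y‖ ^ 2 = ‖⟪y, y⟫‖ := h1.symm
        _ = ‖⟪V (T x), V (V (T y))⟫‖ := by rw [key]
        _ ≤ ‖V (T x)‖ * ‖V (V (T y))‖ := norm_inner_le_norm _ _
        _ ≤ ‖(V ∘L T) x‖ * ‖y‖ := by
            apply mul_le_mul _ (hS y) (norm_nonneg _) (norm_nonneg _)
            simp [comp_apply]
    rcases eq_or_lt_of_le (norm_nonneg y) with h0 | h0
    · rw [← h0]; exact norm_nonneg _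
    · nlinarith
  · apply opNorm_le_bound _ zero_le_one
    intro x
    rw [one_mul, comp_apply]
    exact hScontr x
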